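/- arXiv:2105.03074 — 2 statements merged into one kernel-verified Lean document; each statement's English description precedes it below -/
import Mathlib

section
/- Let p be a prime, w ≥ 1, μ > 0 with 2^μ a positive integer, and c_μ = 2^μ·sin(π/2^μ)/(p·sin(π/p)). For any sets A₁,…,A_{2^μ} ⊆ F_{p^w} with ∑_{i=1}^{2^μ} |A_i| = p^w: for every nonzero α ∈ F_{p^w}, ∑_{i=1}^{2^μ} |1̂_{A_i}(α)| ≤ c_μ, while ∑_{i=1}^{2^μ} |1̂_{A_i}(0)| = 1. -/
open Finset Classical

set_option maxHeartbeats 1000000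

section Helpers
open Real

/-- Shifting a sum of a `p`-periodic function over `ℤ`. -/
lemma sum_shift (f : ℤ → ℝ) (p : ℕ) (hf : ∀ n : ℤ, f (n + p) = f n) (a : ℤ) :
    ∑ n ∈ range p, f (a + n) = ∑ n ∈ range p, f n := by
  have step : ∀ b : ℤ, ∑ n ∈ range p, f ((b + 1) + n) = ∑ n ∈ range p, f (b + n) := by
    intro b
    have h1 : ∑ n ∈ range p, f ((b + 1) + n) = ∑ n ∈ range p, f (b + (n + 1)) := by
      apply Finset.sum_congr rfl; intro n _; congr 1; push_cast; ring
    have h2 := Finset.sum_range_succ' (fun n => f (b + n)) p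
    have h3 := Finset.sum_range_succ (fun n => f (b + n)) p
    have h4 : f (b + (p : ℤ)) = f (b + 0) := by rw [add_zero]; exact hf b
    push_cast at h1 h2 h3
    rw [h1]
    have h5 : (∑ n ∈ range p, f (b + (n + 1))) + f (b + 0) = (∑ n ∈ range p, f (b + n)) + f (b + p) := by
      rw [← h2, h3]
    rw [h4] at h5
    linarith
  induction a using Int.induction_on with
  | zero => simp
  | succ k ih => rw [step k] at *; exact ih
  | pred k ih =>
      have h := step (-(k:ℤ) - 1)
      rw [show (-(k:ℤ) - 1 + 1) = -(k:ℤ) by ring] at h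
      exact h.symm.trans ih

/-- A downward-closed finset of naturals is an initial segment. -/
lemma lower_eq_range (S : Finset ℕ) (h : ∀ n ∈ S, ∀ m, m ≤ n → m ∈ S) :
    S = range S.card := by
  ext n
  simp only [mem_range]
  constructor
  · intro hn
    have hsub : range (n + 1) ⊆ S := by
      intro m hm
      exact h n hn m (Nat.lt_succ_iff.mp (mem_range.mp hm))
    have := Finset.card_le_card hsub
    simpa using this
  · intro hn
    by_contra hns
    have hsub : S ⊆ range n := by
      intro s hs
      rw [mem_range]
      by_contra hsn
      exact hns (h s hs n (Nat.le_of_not_lt hsn))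
    have := Finset.card_le_card hsub
    simp at this
    omega

lemma abs_exp_mul_I_sub_one (y : ℝ) :
    ‖Complex.exp (y * Complex.I) - 1‖ = 2 * |Real.sin (y / 2)| := by
  have h : Complex.exp (y * Complex.I) - 1
      = Complex.ofReal (Real.cos y - 1) + Complex.ofReal (Real.sin y) * Complex.I := by
    rw [Complex.exp_mul_I, ← Complex.ofReal_cos, ← Complex.ofReal_sin]
    push_cast
    ring
  rw [h, Complex.norm_add_mul_I]
  have hd : Real.cos y = 2 * Real.cos (y/2) ^ 2 - 1 := by
    have := Real.cos_two_mul (y/2)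
    rw [show 2*(y/2) = y by ring] at this
    exact this
  have h2 : (Real.cos y - 1) ^ 2 + Real.sin y ^ 2 = (2 * |Real.sin (y / 2)|) ^ 2 := by
    have h3 := Real.sin_sq_add_cos_sq (y/2)
    have h4 := Real.sin_sq_add_cos_sq y
    have habs : |Real.sin (y/2)| ^ 2 = Real.sin (y/2) ^ 2 := sq_abs _
    nlinarith
  rw [h2, Real.sqrt_sq (by positivity)]

/-- Geometric bound: sum of cosines in arithmetic progression. -/
lemma cos_ap_sum_le (x φ : ℝ) (m : ℕ) (hx : 0 < x) (hxpi : x ≤ π / 2)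
    (hmx : (m : ℝ) * x ≤ π) :
    ∑ n ∈ range m, Real.cos (φ + 2 * x * n) ≤ Real.sin ((m : ℝ) * x) / Real.sin x := by
  have hsin : 0 < Real.sin x := Real.sin_pos_of_pos_of_lt_pi hx (lt_of_le_of_lt hxpi (by linarith [Real.pi_pos]))
  set z : ℂ := Complex.exp ((2 * x : ℝ) * Complex.I) with hz
  have hzpow : ∀ n : ℕ, Complex.exp (((φ + 2 * x * n : ℝ)) * Complex.I)
      = Complex.exp ((φ : ℝ) * Complex.I) * z ^ n := by
    intro n
    rw [hz, ← Complex.exp_nat_mul, ← Complex.exp_add]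
    congr 1
    push_cast
    ring
  have hre : ∀ n : ℕ, Real.cos (φ + 2 * x * n)
      = (Complex.exp ((φ + 2 * x * n : ℝ) * Complex.I)).re := by
    intro n; rw [Complex.exp_ofReal_mul_I_re]
  calc ∑ n ∈ range m, Real.cos (φ + 2 * x * n)
      = (∑ n ∈ range m, Complex.exp ((φ + 2 * x * n : ℝ) * Complex.I)).re := by
        rw [Complex.re_sum]; exact Finset.sum_congr rfl fun n _ => hre n
    _ ≤ ‖∑ n ∈ range m, Complex.exp ((φ + 2 * x * n : ℝ) * Complex.I)‖ :=
        Complex.re_le_norm _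
    _ = ‖Complex.exp ((φ:ℝ) * Complex.I)‖ * ‖∑ n ∈ range m, z ^ n‖ := by
        rw [← norm_mul, Finset.mul_sum]
        congr 1
        exact Finset.sum_congr rfl fun n _ => hzpow n
    _ = ‖∑ n ∈ range m, z ^ n‖ := by
        rw [Complex.norm_exp_ofReal_mul_I, one_mul]
    _ ≤ Real.sin ((m : ℝ) * x) / Real.sin x := by
        have hz1 : z ≠ 1 := by
          intro hcon
          rw [hz, Complex.exp_eq_one_iff] at hcon
          obtain ⟨n, hn⟩ := hcon
          have him : (2 * x : ℝ) = n * (2 * π) := by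
            have := congrArg Complex.im hn
            simpa using this
          have hpi := Real.pi_pos
          rcases le_or_gt (n : ℝ) 0 with h | h
          · nlinarith
          · have : (1 : ℝ) ≤ n := by exact_mod_cast (by exact_mod_cast h : (0:ℤ) < n)
            nlinarith
        rw [geom_sum_eq hz1, norm_div]
        have hnum : z ^ m = Complex.exp ((2 * x * m : ℝ) * Complex.I) := by
          rw [hz, ← Complex.exp_nat_mul]
          congr 1
          push_cast
          ring
        have habs1 : ‖z ^ m - 1‖ = 2 * Real.sin ((m:ℝ) * x) := by
          rw [hnum, abs_exp_mul_I_sub_one]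
          rw [show (2 * x * (m:ℝ)) / 2 = (m:ℝ) * x by ring]
          rw [abs_of_nonneg (Real.sin_nonneg_of_nonneg_of_le_pi (by positivity) hmx)]
        have habs2 : ‖z - 1‖ = 2 * Real.sin x := by
          rw [hz, abs_exp_mul_I_sub_one]
          rw [show (2 * x) / 2 = x by ring]
          rw [abs_of_nonneg hsin.le]
        rw [habs1, habs2]
        rw [show 2 * Real.sin ((m:ℝ) * x) / (2 * Real.sin x) = Real.sin ((m:ℝ)*x) / Real.sin x by
          field_simp]

lemma lemC_key (x : ℝ) (hx : 0 ≤ x) (k m : ℕ) (hkx : (k:ℝ) * x ≤ π) (hm : m + 1 ≤ k) :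
    Real.sin ((m:ℝ) * x) + Real.sin x * Real.cos ((k:ℝ) * x) ≤ Real.sin (((m:ℝ) + 1) * x) := by
  have hk1 : (1:ℝ) ≤ k := by exact_mod_cast Nat.one_le_iff_ne_zero.mpr (by omega)
  have hxpi : x ≤ π := by nlinarith [Real.pi_pos]
  have hshalf : 0 ≤ Real.sin (x/2) :=
    Real.sin_nonneg_of_nonneg_of_le_pi (by linarith) (by linarith [Real.pi_pos])
  have hskx : 0 ≤ Real.sin ((k:ℝ) * x) :=
    Real.sin_nonneg_of_nonneg_of_le_pi (by positivity) hkx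
  have h1 : Real.sin (((m:ℝ) + 1) * x) - Real.sin ((m:ℝ) * x)
      = 2 * Real.sin (x/2) * Real.cos ((2*(m:ℝ)+1)*x/2) := by
    rw [Real.sin_sub_sin]
    rw [show (((m:ℝ) + 1) * x - (m:ℝ) * x)/2 = x/2 by ring]
    rw [show (((m:ℝ) + 1) * x + (m:ℝ) * x)/2 = (2*(m:ℝ)+1)*x/2 by ring]
  have h2 : Real.sin x = 2 * Real.sin (x/2) * Real.cos (x/2) := by
    have := Real.sin_two_mul (x/2)
    rw [show 2*(x/2) = x by ring] at this
    linarith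
  have hmk : ((m:ℝ) + 1) ≤ k := by exact_mod_cast hm
  have c1 : Real.cos ((k:ℝ)*x - x/2) ≤ Real.cos ((2*(m:ℝ)+1)*x/2) := by
    apply Real.cos_le_cos_of_nonneg_of_le_pi
    · positivity
    · nlinarith
    · nlinarith
  have c2 : Real.cos ((k:ℝ)*x - x/2)
      = Real.cos ((k:ℝ)*x) * Real.cos (x/2) + Real.sin ((k:ℝ)*x) * Real.sin (x/2) :=
    Real.cos_sub _ _
  have c3 : Real.cos (x/2) * Real.cos ((k:ℝ)*x) ≤ Real.cos ((2*(m:ℝ)+1)*x/2) := by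
    nlinarith [mul_nonneg hskx hshalf]
  have h5 : Real.sin x * Real.cos ((k:ℝ)*x)
      = 2 * Real.sin (x/2) * (Real.cos (x/2) * Real.cos ((k:ℝ)*x)) := by rw [h2]; ring
  have h6 := mul_le_mul_of_nonneg_left c3 (by linarith : (0:ℝ) ≤ 2 * Real.sin (x/2))
  linarith

lemma lemC (x : ℝ) (hx : 0 ≤ x) (k : ℕ) (hkx : (k:ℝ) * x ≤ π) :
    ∀ d m : ℕ, m + d = k →
      Real.sin ((m:ℝ) * x) + (d:ℝ) * Real.sin x * Real.cos ((k:ℝ) * x) ≤ Real.sin ((k:ℝ) * x) := by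
  intro d
  induction d with
  | zero => intro m hm; subst hm; simp
  | succ d ih =>
      intro m hm
      have h1 := ih (m+1) (by omega)
      have h2 := lemC_key x hx k m hkx (by omega)
      push_cast at h1 h2 ⊢
      linarith

lemma cos_window (b y : ℝ) (hb0 : 0 ≤ b) (hbpi : b ≤ π) (h1 : b ≤ y) (h2 : y ≤ 2*π - b) :
    Real.cos y ≤ Real.cos b := by
  rcases le_total y π with hy | hy
  · exact Real.cos_le_cos_of_nonneg_of_le_pi hb0 hy h1
  · have h3 : Real.cos y = Real.cos (2*π - y) := by
      rw [Real.cos_sub, Real.cos_two_pi, Real.sin_two_pi]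
      ring
    rw [h3]
    exact Real.cos_le_cos_of_nonneg_of_le_pi hb0 (by linarith) (by linarith)

/-- Core: any `k` of the `p`-th roots directions, rotated arbitrarily. -/
lemma core (p k : ℕ) (hp : 2 ≤ p) (hk : k ≤ p) (θ : ℝ) (B : Finset ℕ)
    (hBsub : B ⊆ range p) (hBcard : B.card = k) :
    ∑ n ∈ B, Real.cos (2 * (π/p) * n - θ)
      ≤ Real.sin ((k:ℝ) * (π/p)) / Real.sin (π/p) := by
  set x : ℝ := π / p with hxdef
  have hp0 : (0:ℝ) < p := by exact_mod_cast Nat.lt_of_lt_of_le Nat.zero_lt_two hp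
  have hp2 : (2:ℝ) ≤ p := by exact_mod_cast hp
  have hx : 0 < x := by positivity
  have hxpi2 : x ≤ π / 2 := by
    rw [hxdef, div_le_div_iff₀ hp0 (by norm_num)]
    nlinarith [Real.pi_pos]
  have hsin : 0 < Real.sin x :=
    Real.sin_pos_of_pos_of_lt_pi hx (by nlinarith [Real.pi_pos])
  have hkr : (k:ℝ) ≤ p := by exact_mod_cast hk
  have hkx0 : 0 ≤ (k:ℝ) * x := by positivity
  have hkx : (k:ℝ) * x ≤ π := by
    rw [hxdef]
    rw [mul_div_assoc']
    rw [div_le_iff₀ hp0]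
    nlinarith [Real.pi_pos]
  set lam : ℝ := Real.cos ((k:ℝ) * x) with hlam
  have hxp2pi : 2 * x * (p:ℝ) = 2 * π := by
    rw [hxdef]; field_simp
  -- Step A
  have stepA : ∑ n ∈ B, Real.cos (2 * x * n - θ)
      ≤ (k:ℝ) * lam + ∑ n ∈ range p, max (Real.cos (2 * x * n - θ) - lam) 0 := by
    have h1 : ∑ n ∈ B, Real.cos (2 * x * n - θ)
        ≤ ∑ n ∈ B, (lam + max (Real.cos (2 * x * n - θ) - lam) 0) := by
      apply Finset.sum_le_sum
      intro n _
      have := le_max_left (Real.cos (2 * x * n - θ) - lam) 0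
      linarith
    have h2 : ∑ n ∈ B, (lam + max (Real.cos (2 * x * n - θ) - lam) 0)
        = (k:ℝ) * lam + ∑ n ∈ B, max (Real.cos (2 * x * n - θ) - lam) 0 := by
      rw [Finset.sum_add_distrib, Finset.sum_const, hBcard]
      simp [mul_comm]
    have h3 : ∑ n ∈ B, max (Real.cos (2 * x * n - θ) - lam) 0
        ≤ ∑ n ∈ range p, max (Real.cos (2 * x * n - θ) - lam) 0 :=
      Finset.sum_le_sum_of_subset_of_nonneg hBsub (fun n _ _ => le_max_right _ _)
    linarith
  -- periodic extension
  set f : ℤ → ℝ := fun n => max (Real.cos (2 * x * (n:ℝ) - θ) - lam) 0 with hfdef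
  have hper : ∀ n : ℤ, f (n + p) = f n := by
    intro n
    simp only [hfdef]
    congr 1
    rw [show 2 * x * ((n + (p:ℤ) : ℤ):ℝ) - θ = (2 * x * (n:ℝ) - θ) + 2 * x * (p:ℝ) by push_cast; ring]
    rw [hxp2pi, Real.cos_add_two_pi]
  have hcast : ∑ n ∈ range p, max (Real.cos (2 * x * n - θ) - lam) 0 = ∑ n ∈ range p, f (n:ℤ) := by
    apply Finset.sum_congr rfl
    intro n _
    simp only [hfdef, Int.cast_natCast]
  set a : ℤ := ⌈(θ - (k:ℝ) * x) / (2 * x)⌉ with hadef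
  have ha1 : θ - (k:ℝ) * x ≤ 2 * x * a := by
    have := Int.le_ceil ((θ - (k:ℝ) * x) / (2 * x))
    rw [div_le_iff₀ (by positivity)] at this
    linarith
  have ha2 : 2 * x * a < θ - (k:ℝ) * x + 2 * x := by
    have := Int.ceil_lt_add_one ((θ - (k:ℝ) * x) / (2 * x))
    rw [← hadef] at this
    have h2 : (a:ℝ) * (2*x) < ((θ - (k:ℝ) * x) / (2 * x) + 1) * (2*x) :=
      mul_lt_mul_of_pos_right this (by positivity)
    rw [add_mul, div_mul_cancel₀ _ (by positivity : (2:ℝ)*x ≠ 0)] at h2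
    linarith
  have hshift : ∑ n ∈ range p, f (n:ℤ) = ∑ n ∈ range p, f (a + n) := (sum_shift f p hper a).symm
  -- the window set
  set S : Finset ℕ := (range p).filter (fun n : ℕ => 2 * x * ((a:ℝ) + n) - θ < (k:ℝ) * x) with hSdef
  set m : ℕ := S.card with hmdef
  have hoff : ∀ n ∈ range p, n ∉ S → f (a + n) = 0 := by
    intro n hn hns
    have hy1 : (k:ℝ) * x ≤ 2 * x * ((a:ℝ) + n) - θ := by
      rw [hSdef] at hns
      simp only [Finset.mem_filter, hn, true_and, not_lt] at hns
      exact hns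
    have hnp : (n:ℝ) ≤ (p:ℝ) - 1 := by
      have := Finset.mem_range.mp hn
      have : (n:ℝ) + 1 ≤ p := by exact_mod_cast this
      linarith
    have hy2 : 2 * x * ((a:ℝ) + n) - θ ≤ 2 * π - (k:ℝ) * x := by nlinarith
    have hneg : Real.cos (2 * x * ((a:ℝ) + n) - θ) ≤ lam :=
      cos_window ((k:ℝ)*x) _ hkx0 hkx hy1 hy2
    simp only [hfdef]
    rw [show ((a + (n:ℕ) : ℤ):ℝ) = (a:ℝ) + n by push_cast; ring]
    exact max_eq_right (by linarith)
  have hon : ∀ n ∈ S, f (a + n) = Real.cos (2 * x * ((a:ℝ) + n) - θ) - lam := by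
    intro n hn
    rw [hSdef] at hn
    simp only [Finset.mem_filter] at hn
    obtain ⟨hn1, hn2⟩ := hn
    have hylb : -((k:ℝ) * x) ≤ 2 * x * ((a:ℝ) + n) - θ := by
      have hn0 : (0:ℝ) ≤ n := Nat.cast_nonneg n
      nlinarith
    have habs : |2 * x * ((a:ℝ) + n) - θ| ≤ (k:ℝ) * x := abs_le.mpr ⟨hylb, hn2.le⟩
    have hpos : lam ≤ Real.cos (2 * x * ((a:ℝ) + n) - θ) := by
      rw [← Real.cos_abs (2 * x * ((a:ℝ) + n) - θ)]
      exact Real.cos_le_cos_of_nonneg_of_le_pi (abs_nonneg _) hkx habs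
    simp only [hfdef]
    rw [show ((a + (n:ℕ) : ℤ):ℝ) = (a:ℝ) + n by push_cast; ring]
    exact max_eq_left (by linarith)
  have hsplit : ∑ n ∈ range p, f (a + n)
      = ∑ n ∈ S, (Real.cos (2 * x * ((a:ℝ) + n) - θ) - lam) := by
    rw [← Finset.sum_filter_add_sum_filter_not (range p)
      (fun n : ℕ => 2 * x * ((a:ℝ) + n) - θ < (k:ℝ) * x) (fun n => f (a + n))]
    have hz : ∑ n ∈ (range p).filter (fun n : ℕ => ¬(2 * x * ((a:ℝ) + n) - θ < (k:ℝ) * x)),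
        f (a + n) = 0 := by
      apply Finset.sum_eq_zero
      intro n hn
      simp only [Finset.mem_filter] at hn
      apply hoff n hn.1
      rw [hSdef]
      simp only [Finset.mem_filter, hn.1, true_and]
      exact fun hc => hn.2 hc
    rw [hz, add_zero]
    exact Finset.sum_congr rfl hon
  -- S is an initial segment
  have hlower : ∀ n ∈ S, ∀ n', n' ≤ n → n' ∈ S := by
    intro n hn n' hn'
    rw [hSdef] at hn ⊢
    simp only [Finset.mem_filter, Finset.mem_range] at hn ⊢
    obtain ⟨hn1, hn2⟩ := hn
    refine ⟨lt_of_le_of_lt hn' hn1, ?_⟩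
    have : (n':ℝ) ≤ n := by exact_mod_cast hn'
    nlinarith
  have hSrange : S = range m := lower_eq_range S hlower
  have hmk : m ≤ k := by
    by_contra hc
    push_neg at hc
    have hkS : k ∈ S := by rw [hSrange]; exact Finset.mem_range.mpr hc
    rw [hSdef] at hkS
    simp only [Finset.mem_filter] at hkS
    have := hkS.2
    nlinarith [hkS.2]
  have hmp : (m:ℝ) ≤ p := by
    have : m ≤ p := hmdef ▸ le_trans (Finset.card_filter_le _ _) (by rw [Finset.card_range])
    exact_mod_cast this
  -- geometric bound on the window
  have hgeom : ∑ n ∈ S, Real.cos (2 * x * ((a:ℝ) + n) - θ)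
      ≤ Real.sin ((m:ℝ) * x) / Real.sin x := by
    rw [hSrange]
    have heq : ∀ n ∈ range m, Real.cos (2 * x * ((a:ℝ) + n) - θ)
        = Real.cos ((2 * x * (a:ℝ) - θ) + 2 * x * n) := by
      intro n _
      congr 1
      ring
    rw [Finset.sum_congr rfl heq]
    exact cos_ap_sum_le x (2 * x * (a:ℝ) - θ) m hx hxpi2 (by nlinarith)
  -- put everything together
  have hC := lemC x hx.le k hkx (k - m) m (by omega)
  have hcastkm : ((k - m : ℕ):ℝ) = (k:ℝ) - m := by
    rw [Nat.cast_sub hmk]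
  rw [hcastkm] at hC
  have hSsum : ∑ n ∈ S, (Real.cos (2 * x * ((a:ℝ) + n) - θ) - lam)
      = (∑ n ∈ S, Real.cos (2 * x * ((a:ℝ) + n) - θ)) - (m:ℝ) * lam := by
    rw [Finset.sum_sub_distrib, Finset.sum_const, hmdef]
    simp [mul_comm]
  have htot : ∑ n ∈ B, Real.cos (2 * x * n - θ)
      ≤ (k:ℝ) * lam + (Real.sin ((m:ℝ) * x) / Real.sin x - (m:ℝ) * lam) := by
    rw [hcast, hshift, hsplit, hSsum] at stepA
    linarith
  have hfinal : (k:ℝ) * lam + (Real.sin ((m:ℝ) * x) / Real.sin x - (m:ℝ) * lam)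
      ≤ Real.sin ((k:ℝ) * x) / Real.sin x := by
    rw [← sub_nonneg]
    have hm1 : Real.sin ((m:ℝ) * x) / Real.sin x * Real.sin x = Real.sin ((m:ℝ) * x) :=
      div_mul_cancel₀ _ hsin.ne'
    have hk1 : Real.sin ((k:ℝ) * x) / Real.sin x * Real.sin x = Real.sin ((k:ℝ) * x) :=
      div_mul_cancel₀ _ hsin.ne'
    have key : (Real.sin ((k:ℝ) * x) / Real.sin x
        - ((k:ℝ) * lam + (Real.sin ((m:ℝ) * x) / Real.sin x - (m:ℝ) * lam))) * Real.sin x ≥ 0 := by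
      have expand : (Real.sin ((k:ℝ) * x) / Real.sin x
          - ((k:ℝ) * lam + (Real.sin ((m:ℝ) * x) / Real.sin x - (m:ℝ) * lam))) * Real.sin x
          = Real.sin ((k:ℝ) * x) - Real.sin ((m:ℝ) * x)
            - ((k:ℝ) - m) * lam * Real.sin x := by
        field_simp
        ring
      rw [expand]
      linarith
    nlinarith [key, hsin]
  exact le_trans htot hfinal

end Helpers

/-- ω_p = e^{2πi/p}. -/
noncomputable def omg (p : ℕ) : ℂ := Complex.exp (2 * Real.pi * Complex.I / p)

/-- ω_p^{Tr(x)}, where Tr is the field trace from `K` to `ZMod p`. -/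
noncomputable def chr (p : ℕ) [Fact p.Prime] (K : Type*) [Field K] [Algebra (ZMod p) K]
    (x : K) : ℂ := omg p ^ (Algebra.trace (ZMod p) K x).val

/-- Fourier coefficient of the indicator of `A ⊆ K` at `α`. -/
noncomputable def ihat (p : ℕ) [Fact p.Prime] (K : Type*) [Field K] [Fintype K]
    [Algebra (ZMod p) K] (A : Finset K) (α : K) : ℂ :=
  (1 / (Fintype.card K : ℂ)) * ∑ x : K, (if x ∈ A then 1 else 0) * chr p K (α * x)

section Helpers2
open Real

lemma omg_eq (p : ℕ) (hp : 0 < p) : omg p = Complex.exp (((2 * π / p : ℝ)) * Complex.I) := by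
  rw [omg]
  congr 1
  push_cast
  have : (p:ℂ) ≠ 0 := by exact_mod_cast hp.ne'
  field_simp

lemma omg_pow (p : ℕ) (hp : 0 < p) (n : ℕ) :
    omg p ^ n = Complex.exp (((2 * (π/p) * n : ℝ)) * Complex.I) := by
  rw [omg_eq p hp, ← Complex.exp_nat_mul]
  congr 1
  push_cast
  ring

/-- Lev's bound: a sum of `k` distinct `p`-th roots of unity has modulus at most
`sin(kπ/p)/sin(π/p)`. -/
lemma lev (p : ℕ) (hp : 2 ≤ p) (B : Finset (ZMod p)) :
    haveI : NeZero p := ⟨by omega⟩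
    ‖∑ j ∈ B, omg p ^ (ZMod.val j)‖
      ≤ Real.sin ((B.card : ℝ) * (π/p)) / Real.sin (π/p) := by
  haveI : NeZero p := ⟨by omega⟩
  have hp0 : 0 < p := by omega
  have hp0' : (0:ℝ) < p := by exact_mod_cast hp0
  have hk : B.card ≤ p := by
    have := Finset.card_le_card (Finset.subset_univ B)
    rwa [Finset.card_univ, ZMod.card p] at this
  have hsin : 0 < Real.sin (π/p) := by
    apply Real.sin_pos_of_pos_of_lt_pi (by positivity)
    rw [div_lt_iff₀ hp0']
    nlinarith [Real.pi_pos, mul_le_mul_of_nonneg_left (by exact_mod_cast hp : (2:ℝ) ≤ p) Real.pi_pos.le]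
  set z : ℂ := ∑ j ∈ B, omg p ^ (ZMod.val j) with hzdef
  rcases eq_or_ne z 0 with hz0 | hz0
  · rw [hz0]
    simp only [norm_zero]
    apply div_nonneg _ hsin.le
    apply Real.sin_nonneg_of_nonneg_of_le_pi (by positivity)
    have : (B.card : ℝ) ≤ p := by exact_mod_cast hk
    rw [mul_div_assoc']
    rw [div_le_iff₀ hp0']
    nlinarith [Real.pi_pos]
  · set θ : ℝ := Complex.arg z with hθ
    have h0 : ((‖z‖ : ℂ)) * Complex.exp ((θ:ℝ) * Complex.I) = z := by
      rw [hθ]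
      exact Complex.norm_mul_exp_arg_mul_I z
    have habs : Complex.exp (-(θ:ℝ) * Complex.I) * z = (‖z‖ : ℂ) := by
      conv_lhs => rw [← h0]
      rw [mul_comm, mul_assoc, ← Complex.exp_add]
      rw [show ((θ:ℝ):ℂ) * Complex.I + -((θ:ℝ):ℂ) * Complex.I = 0 by ring]
      rw [Complex.exp_zero, mul_one]
    have hre : ‖z‖ = (Complex.exp (-(θ:ℝ) * Complex.I) * z).re := by
      rw [habs, Complex.ofReal_re]
    rw [hre, hzdef, Finset.mul_sum, Complex.re_sum]
    have hterm : ∀ j : ZMod p,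
        (Complex.exp (-(θ:ℝ) * Complex.I) * omg p ^ (ZMod.val j)).re
        = Real.cos (2 * (π/p) * (ZMod.val j) - θ) := by
      intro j
      rw [omg_pow p hp0, ← Complex.exp_add]
      rw [show -(θ:ℂ) * Complex.I + ((2 * (π/p) * (ZMod.val j) : ℝ)) * Complex.I
          = ((2 * (π/p) * (ZMod.val j) - θ : ℝ)) * Complex.I by push_cast; ring]
      exact Complex.exp_ofReal_mul_I_re _
    rw [Finset.sum_congr rfl (fun j _ => hterm j)]
    have himg : ∑ j ∈ B, Real.cos (2 * (π/p) * (ZMod.val j) - θ)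
        = ∑ n ∈ B.image ZMod.val, Real.cos (2 * (π/p) * n - θ) := by
      rw [Finset.sum_image]
      intro a _ b _ hab
      exact ZMod.val_injective p hab
    rw [himg]
    have hcard : (B.image ZMod.val).card = B.card :=
      Finset.card_image_of_injective B (ZMod.val_injective p)
    apply core p B.card hp hk θ _ _ hcard
    intro n hn
    obtain ⟨j, _, hj⟩ := Finset.mem_image.mp hn
    rw [Finset.mem_range, ← hj]
    exact ZMod.val_lt j

/-- Layer-cake plus Jensen: bound for a multiplicity-weighted sum of `p`-th roots. -/
lemma layered (p N : ℕ) (hp : 2 ≤ p) (hN : 0 < N) (m : ZMod p → ℕ) (hm : ∀ j, m j ≤ N) :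
    haveI : NeZero p := ⟨by omega⟩
    ‖∑ j : ZMod p, (m j : ℂ) * omg p ^ (ZMod.val j)‖
      ≤ (N:ℝ) * Real.sin (((∑ j : ZMod p, m j : ℕ):ℝ) * (π/p) / N) / Real.sin (π/p) := by
  haveI : NeZero p := ⟨by omega⟩
  have hp0' : (0:ℝ) < p := by exact_mod_cast (by omega : 0 < p)
  have hsin : 0 < Real.sin (π/p) := by
    apply Real.sin_pos_of_pos_of_lt_pi (by positivity)
    rw [div_lt_iff₀ hp0']
    nlinarith [Real.pi_pos, mul_le_mul_of_nonneg_left (by exact_mod_cast hp : (2:ℝ) ≤ p) Real.pi_pos.le]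
  set x : ℝ := π / p with hxdef
  set B : ℕ → Finset (ZMod p) := fun u => univ.filter (fun j => u < m j) with hBdef
  -- layer cake
  have hlayer : ∑ j : ZMod p, (m j : ℂ) * omg p ^ (ZMod.val j)
      = ∑ u ∈ range N, ∑ j ∈ B u, omg p ^ (ZMod.val j) := by
    have h1 : ∀ j : ZMod p, (m j : ℂ) = ∑ u ∈ range N, (if u < m j then (1:ℂ) else 0) := by
      intro j
      rw [← Finset.sum_filter]
      have : (range N).filter (fun u => u < m j) = range (m j) := by
        ext u
        simp only [Finset.mem_filter, Finset.mem_range]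
        have := hm j
        omega
      rw [this]
      simp
    calc ∑ j : ZMod p, (m j : ℂ) * omg p ^ (ZMod.val j)
        = ∑ j : ZMod p, ∑ u ∈ range N, (if u < m j then (1:ℂ) else 0) * omg p ^ (ZMod.val j) := by
          apply Finset.sum_congr rfl
          intro j _
          rw [← Finset.sum_mul, ← h1]
      _ = ∑ u ∈ range N, ∑ j : ZMod p, (if u < m j then (1:ℂ) else 0) * omg p ^ (ZMod.val j) :=
          Finset.sum_comm
      _ = ∑ u ∈ range N, ∑ j ∈ B u, omg p ^ (ZMod.val j) := by
          apply Finset.sum_congr rfl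
          intro u _
          rw [hBdef]
          rw [Finset.sum_filter]
          apply Finset.sum_congr rfl
          intro j _
          split <;> simp
  -- counting
  have hcount : ∑ u ∈ range N, (B u).card = ∑ j : ZMod p, m j := by
    have h1 : ∀ u, (B u).card = ∑ j : ZMod p, (if u < m j then 1 else 0) := by
      intro u
      rw [hBdef]
      rw [Finset.card_filter]
    rw [Finset.sum_congr rfl (fun u _ => h1 u), Finset.sum_comm]
    apply Finset.sum_congr rfl
    intro j _
    rw [← Finset.sum_filter]
    have : (range N).filter (fun u => u < m j) = range (m j) := by
      ext u
      simp only [Finset.mem_filter, Finset.mem_range]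
      have := hm j
      omega
    rw [this]
    simp
  have hcardp : ∀ u, ((B u).card : ℝ) * x ∈ Set.Icc (0:ℝ) π := by
    intro u
    constructor
    · positivity
    · have h1 : (B u).card ≤ p := by
        have := Finset.card_le_card (Finset.subset_univ (B u))
        rwa [Finset.card_univ, ZMod.card p] at this
      have : ((B u).card : ℝ) ≤ p := by exact_mod_cast h1
      rw [hxdef, mul_div_assoc', div_le_iff₀ hp0']
      nlinarith [Real.pi_pos]
  -- Jensen
  have hjensen : ∑ u ∈ range N, Real.sin (((B u).card : ℝ) * x)
      ≤ (N:ℝ) * Real.sin (((∑ j : ZMod p, m j : ℕ):ℝ) * x / N) := by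
    have hconc : ConcaveOn ℝ (Set.Icc 0 π) Real.sin := strictConcaveOn_sin_Icc.concaveOn
    have hw : ∀ u ∈ range N, (0:ℝ) ≤ 1 / N := fun u _ => by positivity
    have hw1 : ∑ u ∈ range N, (1:ℝ) / N = 1 := by
      rw [Finset.sum_const, Finset.card_range, nsmul_eq_mul]
      exact mul_one_div_cancel (by exact_mod_cast hN.ne')
    have := hconc.le_map_sum hw hw1 (fun u _ => hcardp u)
    simp only [smul_eq_mul] at this
    have harg : ∑ u ∈ range N, (1:ℝ)/N * (((B u).card : ℝ) * x)
        = ((∑ j : ZMod p, m j : ℕ):ℝ) * x / N := by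
      rw [← Finset.mul_sum, ← Finset.sum_mul]
      rw [show (∑ u ∈ range N, ((B u).card:ℝ)) = ((∑ u ∈ range N, (B u).card : ℕ):ℝ) by push_cast; ring]
      rw [hcount]
      ring
    rw [harg] at this
    have hmulN : ∑ u ∈ range N, (1:ℝ)/N * Real.sin (((B u).card : ℝ) * x)
        = (1/N) * ∑ u ∈ range N, Real.sin (((B u).card : ℝ) * x) := by
      rw [Finset.mul_sum]
    rw [hmulN] at this
    have hN' : (0:ℝ) < N := by exact_mod_cast hN
    calc ∑ u ∈ range N, Real.sin (((B u).card : ℝ) * x)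
        = (N:ℝ) * ((1/N) * ∑ u ∈ range N, Real.sin (((B u).card : ℝ) * x)) := by
          rw [← mul_assoc, mul_one_div_cancel hN'.ne', one_mul]
      _ ≤ (N:ℝ) * Real.sin (((∑ j : ZMod p, m j : ℕ):ℝ) * x / N) := by
          apply mul_le_mul_of_nonneg_left this hN'.le
  -- assemble
  calc ‖∑ j : ZMod p, (m j : ℂ) * omg p ^ (ZMod.val j)‖
      = ‖∑ u ∈ range N, ∑ j ∈ B u, omg p ^ (ZMod.val j)‖ := by rw [hlayer]
    _ ≤ ∑ u ∈ range N, ‖∑ j ∈ B u, omg p ^ (ZMod.val j)‖ := by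
        exact norm_sum_le _ _
    _ ≤ ∑ u ∈ range N, Real.sin (((B u).card : ℝ) * x) / Real.sin (π/p) := by
        apply Finset.sum_le_sum
        intro u _
        exact lev p hp (B u)
    _ = (∑ u ∈ range N, Real.sin (((B u).card : ℝ) * x)) / Real.sin (π/p) := by
        rw [Finset.sum_div]
    _ ≤ (N:ℝ) * Real.sin (((∑ j : ZMod p, m j : ℕ):ℝ) * x / N) / Real.sin (π/p) := by
        gcongr

lemma fiber_card (p : ℕ) [Fact p.Prime] (K : Type) [Field K] [Fintype K] [Algebra (ZMod p) K]
    (α : K) (hα : α ≠ 0) :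
    ∃ c : ℕ, 0 < c ∧ p * c = Fintype.card K ∧
      ∀ j : ZMod p, ((univ : Finset K).filter
        (fun x => Algebra.trace (ZMod p) K (α * x) = j)).card = c := by
  have hTsurj : Function.Surjective (Algebra.trace (ZMod p) K) :=
    Algebra.trace_surjective (ZMod p) K
  have hLsurj : ∀ j : ZMod p, ∃ e : K, Algebra.trace (ZMod p) K (α * e) = j := by
    intro j
    obtain ⟨y, hy⟩ := hTsurj j
    refine ⟨α⁻¹ * y, ?_⟩
    rw [show α * (α⁻¹ * y) = y by field_simp]
    exact hy
  have hfib : ∀ j : ZMod p,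
      ((univ : Finset K).filter (fun x => Algebra.trace (ZMod p) K (α * x) = j)).card
      = ((univ : Finset K).filter (fun x => Algebra.trace (ZMod p) K (α * x) = 0)).card := by
    intro j
    obtain ⟨e, he⟩ := hLsurj j
    apply Finset.card_bij' (fun x _ => x - e) (fun y _ => y + e)
    · intro a ha
      simp only [Finset.mem_filter, Finset.mem_univ, true_and] at ha ⊢
      rw [mul_sub, map_sub, ha, he, sub_self]
    · intro a ha
      simp only [Finset.mem_filter, Finset.mem_univ, true_and] at ha ⊢
      rw [mul_add, map_add, ha, he, zero_add]
    · intro a _; ring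
    · intro a _; ring
  have hcard : p * ((univ : Finset K).filter
      (fun x => Algebra.trace (ZMod p) K (α * x) = 0)).card = Fintype.card K := by
    have hsum := Finset.card_eq_sum_card_fiberwise
      (fun x (_ : x ∈ (univ : Finset K)) =>
        Finset.mem_univ (Algebra.trace (ZMod p) K (α * x)))
    rw [Finset.card_univ] at hsum
    rw [hsum, Finset.sum_congr rfl (fun j _ => hfib j), Finset.sum_const, Finset.card_univ,
      ZMod.card, smul_eq_mul]
  refine ⟨_, ?_, hcard, hfib⟩
  have h0 : 0 < Fintype.card K := Fintype.card_pos
  rw [← hcard] at h0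
  exact Nat.pos_of_ne_zero (fun h => by rw [h, mul_zero] at h0; exact lt_irrefl 0 h0)

end Helpers2

open Real in
/-- for sets `A₁,…,A_{2^μ} ⊆ K` with `∑|A_i| = p^w`,
`∑_i |1̂_{A_i}(α)| ≤ c_μ` for all nonzero `α`, and `∑_i |1̂_{A_i}(0)| = 1`. -/
theorem stmt5 (p w μ : ℕ) [Fact p.Prime] (hw : 1 ≤ w) (hμ : 1 ≤ μ)
    (K : Type) [Field K] [Fintype K] [Algebra (ZMod p) K]
    (hK : Fintype.card K = p ^ w)
    (A : Fin (2 ^ μ) → Finset K)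
    (hA : ∑ i, (A i).card = p ^ w) :
    (∀ α : K, α ≠ 0 →
      ∑ i, ‖ihat p K (A i) α‖
        ≤ (2 : ℝ) ^ μ * Real.sin (Real.pi / 2 ^ μ) / (p * Real.sin (Real.pi / p))) ∧
    ∑ i, ‖ihat p K (A i) 0‖ = 1 := by
  have hp : 2 ≤ p := (Fact.out : p.Prime).two_le
  haveI : NeZero p := ⟨by omega⟩
  have hq0 : 0 < Fintype.card K := Fintype.card_pos
  have hq0' : (0:ℝ) < (Fintype.card K : ℝ) := by exact_mod_cast hq0
  have hp0' : (0:ℝ) < p := by exact_mod_cast (by omega : 0 < p)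
  have hsin : 0 < Real.sin (π/p) := by
    apply Real.sin_pos_of_pos_of_lt_pi (by positivity)
    rw [div_lt_iff₀ hp0']
    nlinarith [Real.pi_pos, mul_le_mul_of_nonneg_left (by exact_mod_cast hp : (2:ℝ) ≤ p) Real.pi_pos.le]
  constructor
  · -- nonzero frequencies
    intro α hα
    obtain ⟨c, hc0, hpc, hfib⟩ := fiber_card p K α hα
    have hc0' : (0:ℝ) < c := by exact_mod_cast hc0
    -- the fiber multiplicities for each set
    set m : Fin (2^μ) → ZMod p → ℕ :=
      fun i j => ((A i).filter (fun x => Algebra.trace (ZMod p) K (α * x) = j)).card with hmdef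
    have hmle : ∀ i j, m i j ≤ c := by
      intro i j
      rw [← hfib j]
      exact Finset.card_le_card (Finset.filter_subset_filter _ (Finset.subset_univ (A i)))
    have hmsum : ∀ i, ∑ j : ZMod p, m i j = (A i).card := by
      intro i
      exact (Finset.card_eq_sum_card_fiberwise
        (fun x (_ : x ∈ A i) => Finset.mem_univ (Algebra.trace (ZMod p) K (α * x)))).symm
    -- rewrite ihat as a multiplicity-weighted root-of-unity sum
    have hrew : ∀ i, ihat p K (A i) α
        = (1 / (Fintype.card K : ℂ)) * ∑ j : ZMod p, (m i j : ℂ) * omg p ^ (ZMod.val j) := by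
      intro i
      rw [ihat]
      congr 1
      calc ∑ x : K, (if x ∈ A i then 1 else 0) * chr p K (α * x)
          = ∑ x ∈ A i, chr p K (α * x) := by
            simp only [ite_mul, one_mul, zero_mul]
            rw [← Finset.sum_filter]
            congr 1
            ext x
            simp
        _ = ∑ j : ZMod p, ∑ x ∈ (A i).filter
              (fun x => Algebra.trace (ZMod p) K (α * x) = j), chr p K (α * x) :=
            (Finset.sum_fiberwise _ _ _).symm
        _ = ∑ j : ZMod p, (m i j : ℂ) * omg p ^ (ZMod.val j) := by
            apply Finset.sum_congr rfl
            intro j _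
            have : ∀ x ∈ (A i).filter (fun x => Algebra.trace (ZMod p) K (α * x) = j),
                chr p K (α * x) = omg p ^ (ZMod.val j) := by
              intro x hx
              rw [chr, (Finset.mem_filter.mp hx).2]
            rw [Finset.sum_congr rfl this, Finset.sum_const, nsmul_eq_mul, hmdef]
    -- individual bounds
    have hbound : ∀ i, ‖ihat p K (A i) α‖
        ≤ (c:ℝ) * Real.sin (((A i).card : ℝ) * (π/p) / c) / Real.sin (π/p)
          / (Fintype.card K : ℝ) := by
      intro i
      rw [hrew i, norm_mul]
      have h1 : ‖1 / (Fintype.card K : ℂ)‖ = 1 / (Fintype.card K : ℝ) := by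
        rw [norm_div, norm_one, Complex.norm_natCast]
      rw [h1]
      have h2 := layered p c hp hc0 (m i) (hmle i)
      rw [hmsum i] at h2
      rw [div_eq_mul_one_div ((c:ℝ) * Real.sin (((A i).card : ℝ) * (π/p) / c) / Real.sin (π/p))
        (Fintype.card K : ℝ), mul_comm _ (1 / (Fintype.card K : ℝ))]
      apply mul_le_mul_of_nonneg_left h2 (by positivity)
    -- Jensen over the 2^μ sets
    have hcardA : ∀ i, (A i).card ≤ Fintype.card K := by
      intro i
      rw [hK, ← hA]
      exact Finset.single_le_sum (f := fun i => (A i).card) (fun _ _ => Nat.zero_le _)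
        (Finset.mem_univ i)
    have hmem : ∀ i : Fin (2^μ), ((A i).card : ℝ) * π / (Fintype.card K : ℝ) ∈ Set.Icc (0:ℝ) π := by
      intro i
      constructor
      · positivity
      · rw [div_le_iff₀ hq0']
        have : ((A i).card : ℝ) ≤ (Fintype.card K : ℝ) := by exact_mod_cast hcardA i
        nlinarith [Real.pi_pos]
    have h2μ : (0:ℝ) < (2:ℝ)^μ := by positivity
    have hjensen : ∑ i : Fin (2^μ), Real.sin (((A i).card : ℝ) * π / (Fintype.card K : ℝ))
        ≤ (2:ℝ)^μ * Real.sin (π / 2^μ) := by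
      have hconc : ConcaveOn ℝ (Set.Icc 0 π) Real.sin := strictConcaveOn_sin_Icc.concaveOn
      have hw0 : ∀ i ∈ (univ : Finset (Fin (2^μ))), (0:ℝ) ≤ 1 / (2:ℝ)^μ := fun _ _ => by positivity
      have hw1 : ∑ _i : Fin (2^μ), (1:ℝ) / (2:ℝ)^μ = 1 := by
        rw [Finset.sum_const, Finset.card_univ, Fintype.card_fin, nsmul_eq_mul]
        push_cast
        field_simp
      have hj := hconc.le_map_sum hw0 hw1 (fun i _ => hmem i)
      simp only [smul_eq_mul] at hj
      have harg : ∑ i : Fin (2^μ), (1:ℝ)/(2:ℝ)^μ * (((A i).card : ℝ) * π / (Fintype.card K : ℝ))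
          = π / 2^μ := by
        rw [← Finset.mul_sum]
        have : ∑ i : Fin (2^μ), ((A i).card : ℝ) * π / (Fintype.card K : ℝ)
            = (∑ i : Fin (2^μ), ((A i).card :ℝ)) * π / (Fintype.card K : ℝ) := by
          rw [← Finset.sum_div, ← Finset.sum_mul]
        rw [this]
        have hsumcast : (∑ i : Fin (2^μ), ((A i).card :ℝ)) = (Fintype.card K : ℝ) := by
          rw [hK]
          push_cast [← hA]
          ring
        rw [hsumcast]
        field_simp
        try ring
      rw [harg] at hj
      have : ∑ i : Fin (2^μ), (1:ℝ)/(2:ℝ)^μ * Real.sin (((A i).card : ℝ) * π / (Fintype.card K : ℝ))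
          = (1/(2:ℝ)^μ) * ∑ i : Fin (2^μ), Real.sin (((A i).card : ℝ) * π / (Fintype.card K : ℝ)) := by
        rw [Finset.mul_sum]
      rw [this] at hj
      calc ∑ i : Fin (2^μ), Real.sin (((A i).card : ℝ) * π / (Fintype.card K : ℝ))
          = (2:ℝ)^μ * ((1/(2:ℝ)^μ) * ∑ i : Fin (2^μ),
              Real.sin (((A i).card : ℝ) * π / (Fintype.card K : ℝ))) := by
            rw [← mul_assoc, mul_one_div_cancel h2μ.ne', one_mul]
        _ ≤ (2:ℝ)^μ * Real.sin (π / 2^μ) := mul_le_mul_of_nonneg_left hj h2μ.le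
    -- assemble
    have hargeq : ∀ i, ((A i).card : ℝ) * (π/p) / c
        = ((A i).card : ℝ) * π / (Fintype.card K : ℝ) := by
      intro i
      rw [← hpc]
      push_cast
      field_simp
      try ring
    calc ∑ i, ‖ihat p K (A i) α‖
        ≤ ∑ i : Fin (2^μ), (c:ℝ) * Real.sin (((A i).card : ℝ) * π / (Fintype.card K : ℝ))
            / Real.sin (π/p) / (Fintype.card K : ℝ) := by
          apply Finset.sum_le_sum
          intro i _
          have := hbound i
          rw [hargeq i] at this
          exact this
      _ = (c:ℝ) / Real.sin (π/p) / (Fintype.card K : ℝ)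
            * ∑ i : Fin (2^μ), Real.sin (((A i).card : ℝ) * π / (Fintype.card K : ℝ)) := by
          rw [Finset.mul_sum]
          apply Finset.sum_congr rfl
          intro i _
          ring
      _ ≤ (c:ℝ) / Real.sin (π/p) / (Fintype.card K : ℝ) * ((2:ℝ)^μ * Real.sin (π / 2^μ)) := by
          apply mul_le_mul_of_nonneg_left hjensen (by positivity)
      _ = (2 : ℝ) ^ μ * Real.sin (π / 2 ^ μ) / (p * Real.sin (π / p)) := by
          rw [← hpc]
          push_cast
          field_simp
          try ring
  · -- the zero frequency
    have hzero : ∀ i, ‖ihat p K (A i) 0‖ = ((A i).card : ℝ) / (Fintype.card K : ℝ) := by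
      intro i
      rw [ihat]
      have h1 : ∀ x : K, (if x ∈ A i then (1:ℂ) else 0) * chr p K (0 * x)
          = (if x ∈ A i then (1:ℂ) else 0) := by
        intro x
        rw [zero_mul, chr, map_zero, ZMod.val_zero, pow_zero, mul_one]
      rw [Finset.sum_congr rfl (fun x _ => h1 x)]
      have h2 : ∑ x : K, (if x ∈ A i then (1:ℂ) else 0) = ((A i).card : ℂ) := by
        rw [← Finset.sum_filter]
        rw [show (univ : Finset K).filter (fun x => x ∈ A i) = A i by ext x; simp]
        simp
      rw [h2, norm_mul, norm_div, norm_one, Complex.norm_natCast, Complex.norm_natCast]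
      ring
    rw [Finset.sum_congr rfl (fun i _ => hzero i)]
    rw [← Finset.sum_div]
    rw [show ∑ i : Fin (2^μ), ((A i).card : ℝ) = (Fintype.card K : ℝ) by rw [hK]; push_cast [← hA]; ring]
    field_simp
end

section
/- Let C ⊆ F_{p^w}^n be a linear code of dimension k with dual distance d^⊥, and τ = (τ⁽¹⁾,…,τ⁽ⁿ⁾) any family of functions τ⁽ʲ⁾ : F_{p^w} → F_2^μ. Then the statistical distance between the distribution of (τ⁽¹⁾(x₁),…,τ⁽ⁿ⁾(x_n)) for x uniform in C and for x uniform in F_{p^w}^n equals (1/2)·∑_{ℓ∈(F_2^μ)^n} |∑_{α∈C^⊥∖{0}} ∏_{j=1}^n 1̂_{ℓ_j}(α_j)|, where 1_{ℓ_j} is the indicator of (τ⁽ʲ⁾)^{−1}(ℓ_j). -/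
open Finset Classical

open Classical in
/-- Probability that coordinatewise leakage `τ` of a uniform element of `SF ⊆ K^n`
equals `ℓ`. -/
noncomputable def leakProb {K : Type*} [Fintype K] {n μ : ℕ}
    (τ : Fin n → K → (Fin μ → ZMod 2)) (SF : Finset (Fin n → K))
    (ℓ : Fin n → (Fin μ → ZMod 2)) : ℝ :=
  ((SF.filter fun x => ∀ j, τ j (x j) = ℓ j).card : ℝ) / SF.card

variable (p : ℕ) [Fact p.Prime]

lemma omg_pow_p : omg p ^ p = 1 := by
  have hp : (p : ℂ) ≠ 0 := by
    exact_mod_cast (Fact.out : p.Prime).ne_zero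
  rw [omg, ← Complex.exp_nat_mul]
  rw [show (p : ℂ) * (2 * Real.pi * Complex.I / p) = 2 * Real.pi * Complex.I by
    field_simp]
  exact Complex.exp_two_pi_mul_I

lemma omg_pow_mod (m : ℕ) : omg p ^ (m % p) = omg p ^ m := by
  conv_rhs => rw [← Nat.div_add_mod m p]
  rw [pow_add, pow_mul, omg_pow_p, one_pow, one_mul]

lemma omg_pow_val_add (a b : ZMod p) :
    omg p ^ (a + b).val = omg p ^ a.val * omg p ^ b.val := by
  have : NeZero p := ⟨(Fact.out : p.Prime).ne_zero⟩
  rw [ZMod.val_add, omg_pow_mod, pow_add]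

lemma omg_pow_ne_one {a : ZMod p} (ha : a ≠ 0) : omg p ^ a.val ≠ 1 := by
  have hp : p ≠ 0 := (Fact.out : p.Prime).ne_zero
  have : NeZero p := ⟨hp⟩
  have hprim : IsPrimitiveRoot (omg p) p := by
    have := Complex.isPrimitiveRoot_exp p hp
    rwa [omg]
  exact hprim.pow_ne_one_of_pos_of_lt (Nat.pos_of_ne_zero fun h => ha (by
    rwa [← ZMod.val_eq_zero])).ne' (ZMod.val_lt a)

variable (K : Type*) [Field K] [Fintype K] [Algebra (ZMod p) K]

lemma chr_zero : chr p K 0 = 1 := by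
  have : NeZero p := ⟨(Fact.out : p.Prime).ne_zero⟩
  simp [chr]

lemma chr_add (x y : K) : chr p K (x + y) = chr p K x * chr p K y := by
  rw [chr, chr, chr, map_add, omg_pow_val_add]

lemma sum_chr_eq_zero {α : K} (hα : α ≠ 0) : ∑ x : K, chr p K (α * x) = 0 := by
  have : FiniteDimensional (ZMod p) K := Module.Finite.of_finite
  obtain ⟨b, hb⟩ : ∃ b : K, Algebra.trace (ZMod p) K (α * b) ≠ 0 := by
    have htr := (traceForm_nondegenerate (ZMod p) K).1 α
    simp_rw [Algebra.traceForm_apply] at htr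
    by_contra! hf
    exact hα (htr hf)
  have hne : chr p K (α * b) ≠ 1 := omg_pow_ne_one p hb
  have key : chr p K (α * b) * ∑ x : K, chr p K (α * x) = ∑ x : K, chr p K (α * x) := by
    rw [Finset.mul_sum]
    calc ∑ x : K, chr p K (α * b) * chr p K (α * x)
        = ∑ x : K, chr p K (α * (b + x)) := by
          refine Finset.sum_congr rfl fun x _ => ?_
          rw [mul_add, chr_add]
      _ = ∑ x : K, chr p K (α * x) :=
          Fintype.sum_equiv (Equiv.addLeft b) _ _ (fun x => by simp)
  have := sub_eq_zero.2 key
  rw [← sub_one_mul] at this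
  rcases mul_eq_zero.1 this with h | h
  · exact absurd (by linear_combination h) hne
  · exact h

lemma chr_sum {ι : Type*} (s : Finset ι) (f : ι → K) :
    chr p K (∑ i ∈ s, f i) = ∏ i ∈ s, chr p K (f i) := by
  classical
  induction s using Finset.cons_induction with
  | empty => simpa using chr_zero p K
  | cons a s ha ih => rw [Finset.sum_cons, Finset.prod_cons, chr_add, ih]

lemma sum_chr_all (α : K) :
    ∑ x : K, chr p K (α * x) = if α = 0 then (Fintype.card K : ℂ) else 0 := by
  by_cases h : α = 0
  · simp [h, chr_zero p K]
  · rw [if_neg h]; exact sum_chr_eq_zero p K h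

lemma sum_chr_code {n : ℕ} (C : Submodule K (Fin n → K)) (SF : Finset (Fin n → K))
    (hSF : ∀ x, x ∈ SF ↔ x ∈ C) (β : Fin n → K) :
    ∑ x ∈ SF, chr p K (∑ j, β j * x j)
      = if (∀ c ∈ C, ∑ i, c i * β i = 0) then (SF.card : ℂ) else 0 := by
  classical
  by_cases h : ∀ c ∈ C, ∑ i, c i * β i = 0
  · rw [if_pos h]
    rw [Finset.sum_congr rfl (fun x hx => ?_), Finset.sum_const, nsmul_eq_mul, mul_one]
    have h0 : ∑ j, β j * x j = 0 := by
      rw [Finset.sum_congr rfl (fun j _ => mul_comm (β j) (x j))]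
      exact h x ((hSF x).1 hx)
    rw [h0, chr_zero]
  · rw [if_neg h]
    push_neg at h
    obtain ⟨c, hc, ht⟩ := h
    have : FiniteDimensional (ZMod p) K := Module.Finite.of_finite
    obtain ⟨u, hu⟩ : ∃ u : K, Algebra.trace (ZMod p) K ((∑ i, c i * β i) * u) ≠ 0 := by
      have htr := (traceForm_nondegenerate (ZMod p) K).1 (∑ i, c i * β i)
      simp_rw [Algebra.traceForm_apply] at htr
      by_contra! hf
      exact ht (htr hf)
    set c' : Fin n → K := u • c with hc'def
    have hc' : c' ∈ C := C.smul_mem u hc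
    have hval : ∑ j, β j * c' j = (∑ i, c i * β i) * u := by
      rw [Finset.sum_mul]
      refine Finset.sum_congr rfl fun j _ => ?_
      simp [hc'def]; ring
    have hne : chr p K (∑ j, β j * c' j) ≠ 1 := by
      rw [hval]; exact omg_pow_ne_one p hu
    have key : chr p K (∑ j, β j * c' j) * ∑ x ∈ SF, chr p K (∑ j, β j * x j)
        = ∑ x ∈ SF, chr p K (∑ j, β j * x j) := by
      rw [Finset.mul_sum]
      have hterm : ∀ x : Fin n → K, chr p K (∑ j, β j * c' j) * chr p K (∑ j, β j * x j)
          = chr p K (∑ j, β j * (c' + x) j) := fun x => by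
        rw [← chr_add]
        congr 1
        rw [← Finset.sum_add_distrib]
        exact Finset.sum_congr rfl fun j _ => by simp [mul_add]
      rw [Finset.sum_congr rfl fun x _ => hterm x]
      refine Finset.sum_nbij' (fun x => c' + x) (fun x => x - c') ?_ ?_ ?_ ?_ ?_
      · intro a ha
        exact (hSF _).2 (C.add_mem hc' ((hSF a).1 ha))
      · intro a ha
        exact (hSF _).2 (C.sub_mem ((hSF a).1 ha) hc')
      · intro a _; module
      · intro a _; module
      · intro a _; rfl
    have h2 := sub_eq_zero.2 key
    rw [← sub_one_mul] at h2
    rcases mul_eq_zero.1 h2 with h | h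
    · exact absurd (by linear_combination h) hne
    · exact h

lemma indicator_eq_sum (A : Finset K) (y : K) :
    (if y ∈ A then (1:ℂ) else 0) = ∑ β : K, ihat p K A β * chr p K (-(β * y)) := by
  classical
  have hq : (Fintype.card K : ℂ) ≠ 0 := Nat.cast_ne_zero.2 Fintype.card_ne_zero
  symm
  calc ∑ β : K, ihat p K A β * chr p K (-(β * y))
      = ∑ β : K, ∑ x : K, (1 / (Fintype.card K : ℂ)) *
          ((if x ∈ A then 1 else 0) * (chr p K (β * x) * chr p K (-(β * y)))) := by
        refine Finset.sum_congr rfl fun β _ => ?_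
        rw [ihat, Finset.mul_sum, Finset.sum_mul]
        exact Finset.sum_congr rfl fun x _ => by ring
    _ = ∑ x : K, ∑ β : K, (1 / (Fintype.card K : ℂ)) *
          ((if x ∈ A then 1 else 0) * chr p K ((x - y) * β)) := by
        rw [Finset.sum_comm]
        refine Finset.sum_congr rfl fun x _ => Finset.sum_congr rfl fun β _ => ?_
        rw [← chr_add]
        congr 2
        ring
    _ = ∑ x : K, (1 / (Fintype.card K : ℂ)) *
          ((if x ∈ A then 1 else 0) * (if x - y = 0 then (Fintype.card K : ℂ) else 0)) := by
        refine Finset.sum_congr rfl fun x _ => ?_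
        rw [← Finset.mul_sum, ← Finset.mul_sum, sum_chr_all]
    _ = (if y ∈ A then (1:ℂ) else 0) := by
        rw [Finset.sum_eq_single y]
        · simp [hq]
        · intro b _ hb
          simp [sub_eq_zero, hb]
        · simp

open Classical in
lemma leak_eq {n μ : ℕ} (C : Submodule K (Fin n → K)) (SF : Finset (Fin n → K))
    (hSF : ∀ x, x ∈ SF ↔ x ∈ C)
    (τ : Fin n → K → (Fin μ → ZMod 2)) (ℓ : Fin n → (Fin μ → ZMod 2)) :
    (leakProb τ SF ℓ : ℂ) = ∑ β : Fin n → K,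
      (if (∀ c ∈ C, ∑ i, c i * β i = 0) then 1 else 0) *
        ∏ j, ihat p K (Finset.univ.filter fun x : K => τ j x = ℓ j) (β j) := by
  have hSFcard : (SF.card : ℂ) ≠ 0 := by
    have : SF.Nonempty := ⟨0, (hSF 0).2 C.zero_mem⟩
    exact_mod_cast Finset.card_ne_zero_of_mem this.choose_spec
  have key : ((SF.filter fun x => ∀ j, τ j (x j) = ℓ j).card : ℂ)
      = ∑ β : Fin n → K,
        (if (∀ c ∈ C, ∑ i, c i * β i = 0) then (SF.card : ℂ) else 0) *
          ∏ j, ihat p K (Finset.univ.filter fun x : K => τ j x = ℓ j) (β j) := by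
    calc ((SF.filter fun x => ∀ j, τ j (x j) = ℓ j).card : ℂ)
        = ∑ x ∈ SF, ∏ j, (if τ j (x j) = ℓ j then (1:ℂ) else 0) := by
          rw [Finset.card_filter]
          push_cast
          refine Finset.sum_congr rfl fun x _ => ?_
          rw [Finset.prod_boole]
          simp
      _ = ∑ x ∈ SF, ∏ j, ∑ β : K,
            ihat p K (Finset.univ.filter fun y : K => τ j y = ℓ j) β *
              chr p K (-(β * x j)) := by
          refine Finset.sum_congr rfl fun x _ => Finset.prod_congr rfl fun j _ => ?_
          rw [← indicator_eq_sum]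
          simp
      _ = ∑ x ∈ SF, ∑ β : Fin n → K, ∏ j,
            (ihat p K (Finset.univ.filter fun y : K => τ j y = ℓ j) (β j) *
              chr p K (-(β j * x j))) := by
          refine Finset.sum_congr rfl fun x _ => ?_
          rw [Finset.prod_univ_sum, Fintype.piFinset_univ]
      _ = ∑ β : Fin n → K,
            (∏ j, ihat p K (Finset.univ.filter fun y : K => τ j y = ℓ j) (β j)) *
              ∑ x ∈ SF, chr p K (∑ j, (-β) j * x j) := by
          rw [Finset.sum_comm]
          refine Finset.sum_congr rfl fun β _ => ?_
          rw [Finset.mul_sum]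
          refine Finset.sum_congr rfl fun x _ => ?_
          rw [Finset.prod_mul_distrib, chr_sum]
          congr 1
          exact Finset.prod_congr rfl fun j _ => by congr 1; simp
      _ = ∑ β : Fin n → K,
            (if (∀ c ∈ C, ∑ i, c i * β i = 0) then (SF.card : ℂ) else 0) *
              ∏ j, ihat p K (Finset.univ.filter fun y : K => τ j y = ℓ j) (β j) := by
          refine Finset.sum_congr rfl fun β _ => ?_
          rw [sum_chr_code p K C SF hSF (-β)]
          rw [mul_comm]
          congr 2
          apply propext
          constructor
          · intro h c hc
            have := h c hc
            simpa [neg_eq_zero] using this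
          · intro h c hc
            simpa using h c hc
  rw [leakProb]
  push_cast
  rw [div_eq_iff hSFcard, key, Finset.sum_mul]
  refine Finset.sum_congr rfl fun β _ => ?_
  split_ifs with h <;> ring


open Classical in
/-- the statistical distance between leakage of a uniform codeword of `C`
and leakage of a uniform vector equals
`(1/2)·∑_ℓ |∑_{α∈C^⊥∖{0}} ∏_j 1̂_{ℓ_j}(α_j)|`. -/
theorem stmt8 (p w n μ k : ℕ) [Fact p.Prime] (hw : 1 ≤ w)
    (K : Type) [Field K] [Fintype K] [Algebra (ZMod p) K]
    (hK : Fintype.card K = p ^ w)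
    (C : Submodule K (Fin n → K)) (hk : Module.finrank K C = k)
    (CF DF : Finset (Fin n → K))
    (hCF : ∀ x, x ∈ CF ↔ x ∈ C)
    (hDF : ∀ y, y ∈ DF ↔ ∀ c ∈ C, ∑ i, c i * y i = 0)
    (τ : Fin n → K → (Fin μ → ZMod 2)) :
    (1 / 2 : ℝ) * ∑ ℓ : Fin n → (Fin μ → ZMod 2),
        |leakProb τ CF ℓ - leakProb τ Finset.univ ℓ|
      = (1 / 2 : ℝ) * ∑ ℓ : Fin n → (Fin μ → ZMod 2),
          ‖(∑ α ∈ DF.erase 0,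
            ∏ j, ihat p K (Finset.univ.filter fun x : K => τ j x = ℓ j) (α j))‖ := by
  congr 1
  refine Finset.sum_congr rfl fun ℓ _ => ?_
  have h1 : (leakProb τ CF ℓ : ℂ) = ∑ β ∈ DF,
      ∏ j, ihat p K (Finset.univ.filter fun x : K => τ j x = ℓ j) (β j) := by
    rw [leak_eq p K C CF hCF τ ℓ]
    have hDF' : DF = Finset.univ.filter fun β => ∀ c ∈ C, ∑ i, c i * β i = 0 :=
      Finset.ext fun β => by simp [hDF]
    rw [hDF', Finset.sum_filter]
    refine Finset.sum_congr rfl fun β _ => ?_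
    split_ifs <;> ring
  have h2 : (leakProb τ (Finset.univ : Finset (Fin n → K)) ℓ : ℂ) =
      ∏ j, ihat p K (Finset.univ.filter fun x : K => τ j x = ℓ j) ((0 : Fin n → K) j) := by
    rw [leak_eq p K ⊤ Finset.univ (fun x => by simp) τ ℓ]
    have hcond : ∀ β : Fin n → K,
        (∀ c ∈ (⊤ : Submodule K (Fin n → K)), ∑ i, c i * β i = 0) ↔ β = 0 := by
      intro β
      constructor
      · intro h
        funext i
        have := h (Pi.single i 1) trivial
        simpa [Pi.single_apply] using this
      · intro h c _
        simp [h]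
    rw [Finset.sum_congr rfl fun β _ => by rw [if_congr (hcond β) rfl rfl]]
    rw [Finset.sum_eq_single (0 : Fin n → K)]
    · simp
    · intro b _ hb; simp [hb]
    · simp
  have h0DF : (0 : Fin n → K) ∈ DF := (hDF 0).2 (by simp)
  have key : (∑ α ∈ DF.erase 0,
      ∏ j, ihat p K (Finset.univ.filter fun x : K => τ j x = ℓ j) (α j))
      = ((leakProb τ CF ℓ - leakProb τ (Finset.univ : Finset (Fin n → K)) ℓ : ℝ) : ℂ) := by
    rw [Finset.sum_erase_eq_sub h0DF, ← h1, ← h2]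
    push_cast
    ring
  rw [key, Complex.norm_real, Real.norm_eq_abs]
end
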